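/- arXiv:1404.3525 — 2 statements merged into one kernel-verified Lean document; each statement's English description precedes it below -/
import Mathlib

section
/- Consider a K-user MISO interference channel with channel vectors h_{kl} ∈ ℂ^N for 1 ≤ k,l ≤ K, power gains x_{l,k}(Q_l) = h_{lk}^H Q_l h_{lk} for admissible tuples Q = (Q_1,…,Q_K) of Hermitian positive semidefinite matrices with tr(Q_k) ≤ 1, and user utilities u_1,…,u_K : ℝ_+^K → ℝ_+ where u_k is strictly increasing in its k-th argument and strictly decreasing in each other argument. Suppose an admissible tuple (Q_1,…,Q_K) achieves a Pareto optimal point of the utility region 𝒰 = {(u_1(x^1(Q)),…,u_K(x^K(Q))) : Q admissible}. Then for every k the transmit power gain vector x_k(Q_k) = (x_{k,1}(Q_k),…,x_{k,K}(Q_k)) lies on the outer boundary part of Ω_k in the direction e_k = (−1,…,−1,+1,−1,…,−1) (with +1 in position k); that is, there is no x' ∈ Ω_k with x'_k ≥ x_{k,k}(Q_k), x'_l ≤ x_{k,l}(Q_k) for every l ≠ k, and at least one of these inequalities strict. -/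
open Matrix
open scoped ComplexOrder

/-- The power gain `hᴴ Q h` (a real number for Hermitian `Q`). -/
noncomputable def powerGain {N : ℕ} (Q : Matrix (Fin N) (Fin N) ℂ) (h : Fin N → ℂ) : ℝ :=
  (star h ⬝ᵥ Q.mulVec h).re

/-- An admissible tuple of transmit correlation matrices. -/
def Admissible {N K : ℕ} (Q : Fin K → Matrix (Fin N) (Fin N) ℂ) : Prop :=
  ∀ k, (Q k).PosSemidef ∧ (Q k).trace.re ≤ 1

/-- The power gain region of a transmitter with channels `hk l` to receiver `l`. -/
def PGRegion {N K : ℕ} (hk : Fin K → (Fin N → ℂ)) : Set (Fin K → ℝ) :=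
  {x | ∃ Q : Matrix (Fin N) (Fin N) ℂ, Q.PosSemidef ∧ Q.trace.re ≤ 1 ∧
    x = fun l => powerGain Q (hk l)}

lemma powerGain_nonneg {N : ℕ} {Q : Matrix (Fin N) (Fin N) ℂ} (hQ : Q.PosSemidef)
    (h : Fin N → ℂ) : 0 ≤ powerGain Q h := by
  have := hQ.dotProduct_mulVec_nonneg h
  rw [Complex.le_def] at this
  simpa [powerGain] using this.1

/-- If an admissible tuple `(Q_1,…,Q_K)` achieves a Pareto optimal point of the
utility region, then for every `k` the transmit power gain vector `x_k(Q_k)` lies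
on the outer boundary part of `Ω_k` in the direction `e_k`: there is no
`x' ∈ Ω_k` with `x'_k ≥ x_{k,k}`, `x'_l ≤ x_{k,l}` for all `l ≠ k`, and at least
one inequality strict. -/
theorem pareto_implies_outer_boundary
    (N K : ℕ)
    (h : Fin K → Fin K → (Fin N → ℂ))  -- `h l k` : channel from transmitter `l` to receiver `k`
    (u : Fin K → (Fin K → ℝ) → ℝ)
    (hu_nonneg : ∀ k (x : Fin K → ℝ), (∀ j, 0 ≤ x j) → 0 ≤ u k x)
    (hu_inc : ∀ k (x : Fin K → ℝ), (∀ j, 0 ≤ x j) →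
      ∀ t t' : ℝ, 0 ≤ t → t < t' →
        u k (Function.update x k t) < u k (Function.update x k t'))
    (hu_dec : ∀ k l, l ≠ k → ∀ (x : Fin K → ℝ), (∀ j, 0 ≤ x j) →
      ∀ t t' : ℝ, 0 ≤ t → t < t' →
        u k (Function.update x l t') < u k (Function.update x l t))
    (𝒰 : Set (Fin K → ℝ))
    (h𝒰 : 𝒰 = {pt | ∃ Q : Fin K → Matrix (Fin N) (Fin N) ℂ, Admissible Q ∧
        pt = fun k => u k (fun l => powerGain (Q l) (h l k))})
    (Q : Fin K → Matrix (Fin N) (Fin N) ℂ) (hQ : Admissible Q)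
    (hPareto : ¬ ∃ pt' ∈ 𝒰,
        (∀ k, u k (fun l => powerGain (Q l) (h l k)) ≤ pt' k) ∧
        (∃ k, u k (fun l => powerGain (Q l) (h l k)) < pt' k)) :
    ∀ k, ¬ ∃ x' ∈ PGRegion (h k),
        (powerGain (Q k) (h k k) ≤ x' k) ∧
        (∀ l, l ≠ k → x' l ≤ powerGain (Q k) (h k l)) ∧
        ((powerGain (Q k) (h k k) < x' k) ∨ ∃ l, l ≠ k ∧ x' l < powerGain (Q k) (h k l)) := by
  intro k
  rintro ⟨x', ⟨QX, hQXpsd, hQXtr, hx'⟩, hge, hle, hstrict⟩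
  set Q' : Fin K → Matrix (Fin N) (Fin N) ℂ := Function.update Q k QX with hQ'
  have hQ'adm : Admissible Q' := by
    intro l
    by_cases hl : l = k
    · subst hl; simp [hQ', hQXpsd, hQXtr]
    · simp [hQ', Function.update_of_ne hl]; exact hQ l
  set g : Fin K → (Fin K → ℝ) := fun j l => powerGain (Q l) (h l j) with hg
  set g' : Fin K → (Fin K → ℝ) := fun j l => powerGain (Q' l) (h l j) with hg'
  have hgnn : ∀ j l, 0 ≤ g j l := fun j l => powerGain_nonneg (hQ l).1 _
  have hx'nn : ∀ l, 0 ≤ x' l := by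
    intro l; rw [hx']; exact powerGain_nonneg hQXpsd _
  have hkey : ∀ j, g' j = Function.update (g j) k (x' j) := by
    intro j; funext l
    by_cases hl : l = k
    · subst hl
      simp [hg', hQ', hg, hx']
    · simp [hg', hQ', hg, Function.update_of_ne hl]
  have hmono : ∀ j, u j (g j) ≤ u j (g' j) := by
    intro j
    by_cases hj : j = k
    · subst hj
      rcases eq_or_lt_of_le (hge) with heq | hlt
      · have : g' j = g j := by
          rw [hkey j, ← heq]
          exact Function.update_eq_self _ _
        rw [this]
      · rw [hkey j]
        have := hu_inc j (g j) (hgnn j) (g j j) (x' j) (hgnn j j) hlt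
        rw [Function.update_eq_self] at this
        exact le_of_lt this
    · rcases eq_or_lt_of_le (hle j hj) with heq | hlt
      · have : g' j = g j := by
          rw [hkey j, heq]
          exact Function.update_eq_self _ _
        rw [this]
      · rw [hkey j]
        have := hu_dec j k (Ne.symm hj) (g j) (hgnn j) (x' j) (g j k) (hx'nn j) hlt
        rw [Function.update_eq_self] at this
        exact le_of_lt this
  have hstrict' : ∃ j, u j (g j) < u j (g' j) := by
    rcases hstrict with hlt | ⟨l, hlk, hlt⟩
    · refine ⟨k, ?_⟩
      rw [hkey k]
      have := hu_inc k (g k) (hgnn k) (g k k) (x' k) (hgnn k k) hlt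
      rwa [Function.update_eq_self] at this
    · refine ⟨l, ?_⟩
      rw [hkey l]
      have := hu_dec l k (Ne.symm hlk) (g l) (hgnn l) (x' l) (g l k) (hx'nn l) hlt
      rwa [Function.update_eq_self] at this
  exact hPareto ⟨fun j => u j (g' j), by rw [h𝒰]; exact ⟨Q', hQ'adm, rfl⟩, hmono, hstrict'⟩
end

section
/- Consider channel vectors h_{kl} ∈ ℂ^N for 1 ≤ k,l ≤ K and power gain regions Ω_k = {(h_{k1}^H Q h_{k1}, …, h_{kK}^H Q h_{kK}) : Q Hermitian positive semidefinite, tr(Q) ≤ 1}. Let U : ℝ_+^{K×K} → ℝ be differentiable at X* = [x_1*,…,x_K*] with x_k* ∈ Ω_k for all k, and assume the sign conditions ∂U/∂x_{k,k}(X*) > 0 and ∂U/∂x_{k,l}(X*) < 0 for all l ≠ k. If X* satisfies the stationarity condition ∇_k U(X*)·(x − x_k*) ≤ 0 for all x ∈ Ω_k and all k (where ∇_k U is the gradient of U with respect to the k-th column x_k), then for every k there exists a vector w_k ∈ ℂ^N with ‖w_k‖ ≤ 1 such that x_k* = (|h_{k1}^H w_k|², …, |h_{kK}^H w_k|²); i.e.,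 every stationary point is achieved using rank-one (single-stream beamforming) correlation matrices. -/
open Matrix
open scoped ComplexOrder

lemma cs_normSq {n : ℕ} (x y : Fin n → ℂ) :
    Complex.normSq (star x ⬝ᵥ y) ≤ (∑ i, Complex.normSq (x i)) * (∑ i, Complex.normSq (y i)) := by
  set x' : EuclideanSpace ℂ (Fin n) := WithLp.toLp 2 x with hx'
  set y' : EuclideanSpace ℂ (Fin n) := WithLp.toLp 2 y with hy'
  have h1 : (star x ⬝ᵥ y) = inner (𝕜 := ℂ) x' y' := by
    simp [PiLp.inner_apply, dotProduct, RCLike.inner_apply, mul_comm, hx', hy']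
  have h2 := norm_inner_le_norm (𝕜 := ℂ) x' y'
  have hx : ‖x'‖ ^ 2 = ∑ i, Complex.normSq (x i) := by
    rw [EuclideanSpace.norm_eq, Real.sq_sqrt (by positivity)]
    exact Finset.sum_congr rfl fun i _ => by rw [hx', Complex.sq_norm]
  have hy : ‖y'‖ ^ 2 = ∑ i, Complex.normSq (y i) := by
    rw [EuclideanSpace.norm_eq, Real.sq_sqrt (by positivity)]
    exact Finset.sum_congr rfl fun i _ => by rw [hy', Complex.sq_norm]
  calc Complex.normSq (star x ⬝ᵥ y) = ‖star x ⬝ᵥ y‖ ^ 2 := by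
        rw [← Complex.sq_norm]
    _ ≤ (‖x'‖ * ‖y'‖) ^ 2 := by
        rw [h1]; exact pow_le_pow_left₀ (norm_nonneg _) h2 2
    _ = _ := by rw [mul_pow, hx, hy]

lemma dot_star_comm {n : ℕ} (a b : Fin n → ℂ) :
    star a ⬝ᵥ b = star (star b ⬝ᵥ a) := by
  simp [dotProduct, Finset.sum_comm, map_sum, mul_comm]

lemma dot_outer {n : ℕ} (w x y : Fin n → ℂ) :
    star x ⬝ᵥ (Matrix.vecMulVec w (star w)).mulVec y = (star x ⬝ᵥ w) * (star w ⬝ᵥ y) := by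
  simp only [dotProduct, Matrix.mulVec, Matrix.vecMulVec_apply, Pi.star_apply,
    Finset.mul_sum, Finset.sum_mul]
  rw [Finset.sum_comm]
  exact Finset.sum_congr rfl fun i _ => Finset.sum_congr rfl fun j _ => by ring

lemma star_self_dot {n : ℕ} (a : Fin n → ℂ) :
    star a ⬝ᵥ a = ((∑ i, Complex.normSq (a i) : ℝ) : ℂ) := by
  push_cast
  exact Finset.sum_congr rfl fun i _ => by
    simp [Complex.star_def, ← Complex.normSq_eq_conj_mul_self, Complex.mul_conj, mul_comm]

lemma frob {n : ℕ} (S : Matrix (Fin n) (Fin n) ℂ) (x : Fin n → ℂ) :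
    ∑ i, Complex.normSq ((S.mulVec x) i)
      ≤ (∑ i, ∑ j, Complex.normSq (S i j)) * ∑ j, Complex.normSq (x j) := by
  rw [Finset.sum_mul]
  refine Finset.sum_le_sum fun i _ => ?_
  simpa [Matrix.mulVec, dotProduct, Complex.normSq_conj] using cs_normSq (star (S i)) x

/-- The rank-one power gain vector of a unit-ball vector `w` lies in the region. -/
lemma outer_mem {N K : ℕ} (hk : Fin K → (Fin N → ℂ)) (w : Fin N → ℂ)
    (hw : (∑ i, Complex.normSq (w i)) ≤ 1) :
    (fun l => Complex.normSq (star (hk l) ⬝ᵥ w)) ∈ PGRegion hk := by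
  refine ⟨Matrix.vecMulVec w (star w), .of_dotProduct_mulVec_nonneg ?_ ?_, ?_, ?_⟩
  · ext i j
    simp [Matrix.conjTranspose_apply, Matrix.vecMulVec_apply, mul_comm]
  · intro x
    rw [dot_outer, dot_star_comm w x]
    rw [show (star x ⬝ᵥ w) * star (star x ⬝ᵥ w)
        = ((Complex.normSq (star x ⬝ᵥ w) : ℝ) : ℂ) from Complex.mul_conj _]
    exact Complex.zero_le_real.2 (Complex.normSq_nonneg _)
  · have : (Matrix.vecMulVec w (star w)).trace = ((∑ i, Complex.normSq (w i) : ℝ) : ℂ) := by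
      rw [Matrix.trace]
      push_cast
      exact Finset.sum_congr rfl fun i _ => by
        simp [Matrix.diag, Matrix.vecMulVec_apply, Complex.mul_conj]
    rw [this, Complex.ofReal_re]
    exact hw
  · funext l
    unfold powerGain
    rw [dot_outer, dot_star_comm w (hk l),
      show (star (hk l) ⬝ᵥ w) * star (star (hk l) ⬝ᵥ w)
        = ((Complex.normSq (star (hk l) ⬝ᵥ w) : ℝ) : ℂ) from Complex.mul_conj _,
      Complex.ofReal_re]

/-- Every stationary point `X* = [x_1*,…,x_K*]` (columns `Xstar k ∈ Ω_k`) of a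
differentiable utility `U` with the sign conditions `∂U/∂x_{k,k} > 0` and
`∂U/∂x_{k,l} < 0` (`l ≠ k`) is achieved by rank-one (single-stream beamforming)
correlation matrices: for every `k` there is `w_k` with `‖w_k‖ ≤ 1` and
`x_k* = (|h_{k1}ᴴ w_k|², …, |h_{kK}ᴴ w_k|²)`. -/
theorem stationary_point_rank_one
    (N K : ℕ)
    (h : Fin K → Fin K → (Fin N → ℂ))  -- `h k l` : channel from transmitter `k` to receiver `l`
    (U : (Fin K → Fin K → ℝ) → ℝ)
    (Xstar : Fin K → Fin K → ℝ)
    (hX : ∀ k, Xstar k ∈ PGRegion (h k))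
    (F : (Fin K → Fin K → ℝ) →L[ℝ] ℝ)
    (hdiff : HasFDerivAt U F Xstar)
    (hsign_pos : ∀ k, 0 < F (Pi.single k (Pi.single k 1)))
    (hsign_neg : ∀ k l, l ≠ k → F (Pi.single k (Pi.single l 1)) < 0)
    (hstat : ∀ k, ∀ x ∈ PGRegion (h k), F (Pi.single k (x - Xstar k)) ≤ 0) :
    ∀ k, ∃ w : Fin N → ℂ, (∑ i, Complex.normSq (w i)) ≤ 1 ∧
      Xstar k = fun l => Complex.normSq (star (h k l) ⬝ᵥ w) := by
  intro k
  obtain ⟨Q, hQ, htr, hXeq⟩ := hX k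
  -- linear expansion of the derivative on the k-th column
  have hF : ∀ v : Fin K → ℝ,
      F (Pi.single k v) = ∑ l, v l * F (Pi.single k (Pi.single l 1)) := by
    intro v
    have h0 := LinearMap.pi_apply_eq_sum_univ
      ((F : (Fin K → Fin K → ℝ) →ₗ[ℝ] ℝ).comp
        (LinearMap.single ℝ (fun _ : Fin K => (Fin K → ℝ)) k)) v
    have hsingle : ∀ l : Fin K, (fun j => if l = j then (1:ℝ) else 0) = Pi.single l 1 := by
      intro l; funext j; rw [Pi.single_apply]; exact if_congr eq_comm rfl rfl
    simp only [LinearMap.coe_comp, Function.comp_apply, LinearMap.coe_single,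
      ContinuousLinearMap.coe_coe, smul_eq_mul, hsingle] at h0
    exact h0
  -- it suffices to find a good `w`
  suffices hsuf : ∃ w : Fin N → ℂ, (∑ i, Complex.normSq (w i)) ≤ 1 ∧
      Complex.normSq (star (h k k) ⬝ᵥ w) = Xstar k k ∧
      (∀ l, Complex.normSq (star (h k l) ⬝ᵥ w) ≤ Xstar k l) by
    obtain ⟨w, hw1, hwk, hwle⟩ := hsuf
    refine ⟨w, hw1, ?_⟩
    set x' : Fin K → ℝ := fun l => Complex.normSq (star (h k l) ⬝ᵥ w) with hx'
    have hle := hstat k x' (outer_mem (h k) w hw1)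
    rw [show x' - Xstar k = fun l => x' l - Xstar k l from rfl, hF] at hle
    have hterm : ∀ l ∈ Finset.univ,
        0 ≤ (x' l - Xstar k l) * F (Pi.single k (Pi.single l 1)) := by
      intro l _
      rcases eq_or_ne l k with rfl | hlk
      · rw [show x' l - Xstar l l = 0 from by rw [hx']; simpa using sub_eq_zero.2 hwk]
        simp
      · have h1 : x' l - Xstar k l ≤ 0 := sub_nonpos.2 (hwle l)
        have h2 : F (Pi.single k (Pi.single l 1)) ≤ 0 := le_of_lt (hsign_neg k l hlk)
        have h3 := mul_nonneg (neg_nonneg.2 h1) (neg_nonneg.2 h2)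
        rwa [neg_mul_neg] at h3
    have hsum0 : ∑ l, (x' l - Xstar k l) * F (Pi.single k (Pi.single l 1)) = 0 :=
      le_antisymm hle (Finset.sum_nonneg hterm)
    have hall := (Finset.sum_eq_zero_iff_of_nonneg hterm).1 hsum0
    funext l
    rcases eq_or_ne l k with rfl | hlk
    · exact hwk.symm
    · have h1 := hall l (Finset.mem_univ l)
      have h2 : F (Pi.single k (Pi.single l 1)) ≠ 0 := ne_of_lt (hsign_neg k l hlk)
      have h3 : x' l - Xstar k l = 0 := by
        rcases mul_eq_zero.1 h1 with h' | h'
        · exact h'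
        · exact absurd h' h2
      exact (sub_eq_zero.1 h3).symm
  -- construct `w` from the square root of `Q`
  clear hstat hsign_neg hsign_pos hdiff hF
  obtain ⟨S, hSH, hSS⟩ : ∃ S : Matrix (Fin N) (Fin N) ℂ, S.IsHermitian ∧ S * S = Q := by
    open scoped MatrixOrder in
    exact ⟨CFC.sqrt Q, (CFC.sqrt_nonneg Q).posSemidef.1, CFC.sqrt_mul_sqrt_self Q hQ.nonneg⟩
  set u : Fin K → (Fin N → ℂ) := fun l => S.mulVec (h k l) with hu
  have hdotS : ∀ (l : Fin K) (v : Fin N → ℂ),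
      star (h k l) ⬝ᵥ S.mulVec v = star (u l) ⬝ᵥ v := by
    intro l v
    rw [Matrix.dotProduct_mulVec]
    congr 1
    rw [hu]
    simp only
    rw [Matrix.star_mulVec, hSH]
  have hXl : ∀ l, Xstar k l = ∑ i, Complex.normSq (u l i) := by
    intro l
    have : Xstar k l = powerGain Q (h k l) := by rw [hXeq]
    rw [this]
    unfold powerGain
    rw [← hSS, ← Matrix.mulVec_mulVec, hdotS, star_self_dot, Complex.ofReal_re]
  set t := ∑ i, Complex.normSq (u k i) with htdef
  have ht0 : 0 ≤ t := Finset.sum_nonneg fun i _ => Complex.normSq_nonneg _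
  rcases eq_or_lt_of_le ht0 with htz | htpos
  · -- degenerate case : `w = 0`
    refine ⟨0, by simp, ?_, ?_⟩
    · simp only [dotProduct_zero, Complex.normSq_zero]
      rw [hXl k, ← htdef]
      exact htz
    · intro l
      simp only [dotProduct_zero, Complex.normSq_zero]
      rw [hXl l]
      exact Finset.sum_nonneg fun i _ => Complex.normSq_nonneg _
  · -- main case
    set c : ℂ := ((Real.sqrt t : ℝ) : ℂ)⁻¹ with hc
    set w : Fin N → ℂ := c • S.mulVec (u k) with hwdef
    have hcsq : Complex.normSq c = t⁻¹ := by
      rw [hc, map_inv₀, Complex.normSq_ofReal, Real.mul_self_sqrt ht0]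
    have hdotw : ∀ l, star (h k l) ⬝ᵥ w = c * (star (u l) ⬝ᵥ u k) := by
      intro l
      rw [hwdef, dotProduct_smul, smul_eq_mul, hdotS]
    have hnsq : ∀ l, Complex.normSq (star (h k l) ⬝ᵥ w)
        = t⁻¹ * Complex.normSq (star (u l) ⬝ᵥ u k) := by
      intro l
      rw [hdotw, Complex.normSq_mul, hcsq]
    refine ⟨w, ?_, ?_, ?_⟩
    · -- norm bound
      have hwsum : ∑ i, Complex.normSq (w i)
          = t⁻¹ * ∑ i, Complex.normSq ((S.mulVec (u k)) i) := by
        rw [Finset.mul_sum]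
        exact Finset.sum_congr rfl fun i _ => by
          simp [hwdef, Pi.smul_apply, smul_eq_mul, Complex.normSq_mul, hcsq]
      have htrace : (∑ i, ∑ j, Complex.normSq (S i j)) = Q.trace.re := by
        rw [← hSS, Matrix.trace, Complex.re_sum]
        refine Finset.sum_congr rfl fun i _ => ?_
        rw [Matrix.diag_apply, Matrix.mul_apply, Complex.re_sum]
        refine Finset.sum_congr rfl fun j _ => ?_
        have hji : S j i = starRingEnd ℂ (S i j) := by
          conv_lhs => rw [← hSH]
          rfl
        rw [hji, Complex.mul_conj, Complex.ofReal_re]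
      have hfr := frob S (u k)
      rw [htrace] at hfr
      rw [hwsum]
      calc t⁻¹ * ∑ i, Complex.normSq ((S.mulVec (u k)) i)
          ≤ t⁻¹ * (Q.trace.re * t) := by
            apply mul_le_mul_of_nonneg_left _ (inv_nonneg.2 ht0)
            exact hfr
        _ = Q.trace.re := by field_simp
        _ ≤ 1 := htr
    · -- equality at `k`
      rw [hnsq k, star_self_dot, ← htdef, Complex.normSq_ofReal, hXl k, ← htdef]
      field_simp
    · -- inequality at `l`
      intro l
      rw [hnsq l, hXl l]
      have := cs_normSq (u l) (u k)
      rw [← htdef] at this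
      calc t⁻¹ * Complex.normSq (star (u l) ⬝ᵥ u k)
          ≤ t⁻¹ * ((∑ i, Complex.normSq (u l i)) * t) :=
            mul_le_mul_of_nonneg_left this (inv_nonneg.2 ht0)
        _ = ∑ i, Complex.normSq (u l i) := by field_simp
end
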